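/- Assume μ is not a Dirac point mass. Define the conditional expectation given signal z by E(z) := (∫_{[0,1]} x f(z,x) dμ(x)) / (∫_{[0,1]} f(z,x) dμ(x)). Then E(1) > E(2) = ∫_{[0,1]} x dμ(x): the conditional mean of X given the lower signal value 1 strictly exceeds the conditional mean given the higher signal value 2, which equals the prior mean. (Via the constructed screening signal S with P(S ≥ z | X = x) = f(z,x), this says E[X | S ≥ 1] > E[X | S ≥ 2] = E[X].) -/

import Mathlib

open MeasureTheory Set

/-- The signal density `f(z,x)`: a right-angled triangle on `[x, x+1)`
followed by a rectangle of height `1/3` on `[x+1, x+2]`. -/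
noncomputable def sigDen (z x : ℝ) : ℝ :=
  if x ≤ z ∧ z < x + 1 then 1 - (2 / 3) * (z - x)
  else if x + 1 ≤ z ∧ z ≤ x + 2 then 1 / 3
  else 0

/-- The conditional expectation of `X` given the signal realization `Z = z`. -/
noncomputable def condExpSig (μ : Measure ℝ) (z : ℝ) : ℝ :=
  (∫ x in Icc (0 : ℝ) 1, x * sigDen z x ∂μ) / (∫ x in Icc (0 : ℝ) 1, sigDen z x ∂μ)

/-- If the prior `μ` on `[0,1]` is not a Dirac point mass, then
the conditional mean given the lower signal `1` strictly exceeds the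
conditional mean given the higher signal `2`, which equals the prior mean:
`E(1) > E(2) = ∫ x dμ`. -/
theorem stmt_4 (μ : Measure ℝ) [IsProbabilityMeasure μ]
    (hμ : μ (Icc (0 : ℝ) 1) = 1)
    (hnd : ∀ a : ℝ, μ ≠ Measure.dirac a) :
    condExpSig μ 2 = (∫ x in Icc (0 : ℝ) 1, x ∂μ) ∧
    condExpSig μ 1 > condExpSig μ 2 := by

  set s : Set ℝ := Icc (0:ℝ) 1 with hs
  have hms : MeasurableSet s := measurableSet_Icc
  set m₁ : ℝ := ∫ x in s, x ∂μ with hm₁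
  set m₂ : ℝ := ∫ x in s, x^2 ∂μ with hm₂
  have hcompl : μ sᶜ = 0 := by
    have := measure_compl hms (measure_ne_top μ s)
    simp [hμ] at this; simpa using this
  have hrestrict : μ.restrict s = μ :=
    Measure.restrict_eq_self_of_ae_mem (by
      rw [Filter.eventually_iff]
      simpa [compl_def, mem_ae_iff] using hcompl)
  have Ix : IntegrableOn (fun x : ℝ => x) s μ :=
    (continuous_id.continuousOn).integrableOn_Icc
  have Ix2 : IntegrableOn (fun x : ℝ => x^2) s μ :=
    ((continuous_pow 2).continuousOn).integrableOn_Icc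
  have hden2 : EqOn (sigDen 2) (fun _ => (1:ℝ)/3) s := by
    intro x hx
    obtain ⟨hx0, hx1⟩ := hx
    simp only [sigDen]
    rw [if_neg (by intro h; linarith [h.2]), if_pos ⟨by linarith, by linarith⟩]
  have hden1 : EqOn (sigDen 1) (fun x => 1/3 + (2/3) * x) s := by
    intro x hx
    obtain ⟨hx0, hx1⟩ := hx
    simp only [sigDen]
    by_cases h : 0 < x
    · rw [if_pos ⟨by linarith, by linarith⟩]; ring
    · have hx0' : x = 0 := le_antisymm (not_lt.mp h) hx0
      subst hx0'
      rw [if_neg (by intro h; linarith [h.2]), if_pos ⟨by norm_num, by norm_num⟩]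
      norm_num
  have hs1 : (μ s).toReal = 1 := by rw [hμ]; simp
  have hconst : IntegrableOn (fun _ : ℝ => (1:ℝ)/3) s μ :=
    (continuous_const.continuousOn).integrableOn_Icc
  have hE2 : condExpSig μ 2 = m₁ := by
    unfold condExpSig
    rw [← hs]
    rw [setIntegral_congr_fun hms
          (fun x hx => show x * sigDen 2 x = x * (1/3) by rw [hden2 hx]),
        setIntegral_congr_fun hms (fun x hx => hden2 hx),
        setIntegral_const, integral_mul_const, measureReal_def, hs1]
    norm_num
    exact hm₁.symm
  have hE1 : condExpSig μ 1 = (1/3 * m₁ + 2/3 * m₂) / (1/3 + 2/3 * m₁) := by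
    unfold condExpSig
    rw [← hs]
    rw [setIntegral_congr_fun hms
          (fun x hx => show x * sigDen 1 x = 1/3 * x + 2/3 * x^2 by rw [hden1 hx]; ring),
        setIntegral_congr_fun hms (fun x hx => hden1 hx)]
    rw [integral_add (Ix.const_mul _) (Ix2.const_mul _),
        integral_const_mul, integral_const_mul]
    congr 1
    rw [integral_add (μ := μ.restrict s) (f := fun _ : ℝ => (1:ℝ)/3)
          (g := fun x : ℝ => 2/3 * x) hconst (Ix.const_mul _),
        setIntegral_const, integral_const_mul, measureReal_def, hs1]
    norm_num
    exact hm₁.symm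
  have hm₁0 : 0 ≤ m₁ := setIntegral_nonneg hms (fun x hx => hx.1)
  have IA : IntegrableOn (fun x : ℝ => x^2 - 2*m₁*x) s μ :=
    (Continuous.continuousOn (by continuity)).integrableOn_Icc
  have IC : IntegrableOn (fun _ : ℝ => m₁^2) s μ :=
    (continuous_const.continuousOn).integrableOn_Icc
  have hvar : ∫ x in s, (x - m₁)^2 ∂μ = m₂ - 2*m₁*m₁ + m₁^2 := by
    rw [setIntegral_congr_fun hms
          (show EqOn (fun x : ℝ => (x - m₁)^2)
            (fun x => (x^2 - 2*m₁*x) + m₁^2) s from fun x _ => by ring)]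
    rw [integral_add (μ := μ.restrict s) (f := fun x : ℝ => x^2 - 2*m₁*x)
          (g := fun _ : ℝ => m₁^2) IA IC,
        integral_sub (μ := μ.restrict s) (f := fun x : ℝ => x^2)
          (g := fun x : ℝ => 2*m₁*x) Ix2 (Ix.const_mul _),
        integral_const_mul, setIntegral_const, measureReal_def, hs1]
    simp
    rw [hm₁, hm₂]
  have hvnn : 0 ≤ ∫ x in s, (x - m₁)^2 ∂μ :=
    setIntegral_nonneg hms (fun x _ => sq_nonneg _)
  have hvne : ∫ x in s, (x - m₁)^2 ∂μ ≠ 0 := by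
    intro h0
    have hint : Integrable (fun x => (x - m₁)^2) (μ.restrict s) :=
      ((continuous_id.sub continuous_const).pow 2).continuousOn.integrableOn_Icc
    have hae := (integral_eq_zero_iff_of_nonneg (fun x => sq_nonneg _) hint).mp h0
    rw [hrestrict] at hae
    have key : μ {x : ℝ | x ≠ m₁} = 0 := by
      have : ∀ᵐ x ∂μ, x = m₁ := by
        filter_upwards [hae] with x hx
        have h2 : (x - m₁)^2 = 0 := hx
        nlinarith [sq_nonneg (x - m₁)]
      simpa [ae_iff] using this
    apply hnd m₁
    ext t ht
    rw [Measure.dirac_apply' _ ht]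
    by_cases hmem : m₁ ∈ t
    · have htc : μ tᶜ = 0 :=
        measure_mono_null (by intro x hx hx'; subst hx'; exact hx hmem) key
      have h2 := measure_compl ht (measure_ne_top μ t)
      rw [htc, measure_univ] at h2
      have h4 : (1 : ENNReal) ≤ μ t := tsub_eq_zero_iff_le.mp h2.symm
      have h1 : μ t = 1 := le_antisymm prob_le_one h4
      simp [indicator_of_mem hmem, h1]
    · have h0' : μ t = 0 :=
        measure_mono_null (by intro x hx hx'; subst hx'; exact hmem hx) key
      simp [indicator_of_notMem hmem, h0']
  have hvpos : 0 < m₂ - m₁^2 := by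
    have := lt_of_le_of_ne hvnn (Ne.symm hvne)
    rw [hvar] at this; nlinarith
  refine ⟨hE2, ?_⟩
  rw [hE1, hE2, gt_iff_lt, lt_div_iff₀ (by linarith)]
  nlinarith
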